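/- For any symmetric probability measure φ on a countable group G, the continuous-time return probability h_t^φ(e) = e^{−t}Σ_{k≥0}(t^k/k!)φ^{(k)}(e) satisfies φ^{(2n+2)}(e) ≤ 2·h_{2n}^φ(e) and h_{4n}^φ(e) ≤ e^{−2n} + φ^{(2n)}(e) for all n ≥ 1. -/

import Mathlib

set_option maxHeartbeats 2000000
set_option synthInstance.maxHeartbeats 400000

open scoped BigOperators

/-- A symmetric probability measure on a group. -/
def IsSymProb {G : Type*} [Group G] (φ : G → ℝ) : Prop :=
  (∀ x, 0 ≤ φ x) ∧ (∑' x, φ x) = 1 ∧ ∀ x, φ x⁻¹ = φ x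

/-- Convolution of two measures on a group. -/
noncomputable def convolve {G : Type*} [Group G] (μ ν : G → ℝ) : G → ℝ :=
  fun x => ∑' y : G, μ y * ν (y⁻¹ * x)

open Classical in
/-- Convolution powers `μ^{(n)}` (with `μ^{(0)} = δ_e`). -/
noncomputable def convPow {G : Type*} [Group G] (μ : G → ℝ) : ℕ → G → ℝ
  | 0 => fun x => if x = 1 then 1 else 0
  | n + 1 => convolve μ (convPow μ n)

/-- The continuous-time return probability
`h_t^φ(e) = e^{−t} Σ_{k≥0} (t^k/k!) φ^{(k)}(e)`. -/
noncomputable def contHeat {G : Type*} [Group G] (φ : G → ℝ) (t : ℝ) : ℝ :=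
  Real.exp (-t) * ∑' k : ℕ, t ^ k / (Nat.factorial k : ℝ) * convPow φ k 1

namespace DVC

open scoped ENNReal

variable {G : Type*} [Group G] [Countable G]

/-! ### Elementary facts about convolution powers -/

lemma prob_summable {μ : G → ℝ} (h1 : ∑' x, μ x = 1) : Summable μ := by
  by_contra h
  rw [tsum_eq_zero_of_not_summable h] at h1
  norm_num at h1

lemma conv_prob {μ ν : G → ℝ} (hμ0 : ∀ x, 0 ≤ μ x) (hμ1 : ∑' x, μ x = 1)
    (hν0 : ∀ x, 0 ≤ ν x) (hν1 : ∑' x, ν x = 1) :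
    (∀ x, 0 ≤ convolve μ ν x) ∧ ∑' x, convolve μ ν x = 1 := by
  have hμs := prob_summable hμ1
  have hνs := prob_summable hν1
  have hinner : ∀ y, Summable fun x => μ y * ν (y⁻¹ * x) := fun y =>
    (((Equiv.mulLeft y⁻¹).summable_iff.2 hνs).mul_left (μ y))
  have hinner_sum : ∀ y, ∑' x, μ y * ν (y⁻¹ * x) = μ y := by
    intro y
    have he : (∑' x, ν (y⁻¹ * x)) = ∑' x, ν x := (Equiv.mulLeft y⁻¹).tsum_eq ν
    rw [tsum_mul_left, he, hν1, mul_one]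
  have hF0 : ∀ p : G × G, 0 ≤ μ p.1 * ν (p.1⁻¹ * p.2) := fun p =>
    mul_nonneg (hμ0 _) (hν0 _)
  have hFs : Summable fun p : G × G => μ p.1 * ν (p.1⁻¹ * p.2) := by
    refine (summable_prod_of_nonneg hF0).2 ⟨fun y => hinner y, ?_⟩
    simpa only [hinner_sum] using hμs
  refine ⟨fun x => tsum_nonneg fun y => mul_nonneg (hμ0 _) (hν0 _), ?_⟩
  have hswap : ∑' x, ∑' y, μ y * ν (y⁻¹ * x) = ∑' y, ∑' x, μ y * ν (y⁻¹ * x) :=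
    Summable.tsum_comm' hFs (fun y => hinner y) (fun x => hFs.prod_symm.prod_factor x)
  show ∑' x, ∑' y, μ y * ν (y⁻¹ * x) = 1
  rw [hswap]
  simp only [hinner_sum]
  exact hμ1

lemma convPow_prob {φ : G → ℝ} (hpos : ∀ x, 0 ≤ φ x) (hsum : ∑' x, φ x = 1) :
    ∀ k, (∀ x, 0 ≤ convPow φ k x) ∧ ∑' x, convPow φ k x = 1 := by
  intro k
  induction k with
  | zero =>
      constructor
      · intro x
        simp only [convPow]
        split <;> norm_num
      · rw [tsum_eq_single (1 : G) (by intro b hb; simp [convPow, hb])]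
        simp [convPow]
  | succ m ih =>
      exact conv_prob hpos hsum ih.1 ih.2

lemma convPow_le_one {φ : G → ℝ} (hpos : ∀ x, 0 ≤ φ x) (hsum : ∑' x, φ x = 1)
    (k : ℕ) (x : G) : convPow φ k x ≤ 1 := by
  obtain ⟨h0, h1⟩ := convPow_prob hpos hsum k
  calc convPow φ k x ≤ ∑' y, convPow φ k y :=
        Summable.le_tsum (prob_summable h1) x fun j _ => h0 j
    _ = 1 := h1

/-! ### The Hilbert space and the convolution operator -/

local notation "ℋ" => lp (fun _ : G => ℂ) 2

instance instCFCReal : ContinuousFunctionalCalculus ℝ (ℋ →L[ℂ] ℋ) IsSelfAdjoint :=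
  IsSelfAdjoint.instContinuousFunctionalCalculus

/-- Pack a function into `ℓ²`. -/
def mkH (f : G → ℂ) (hf : Memℓp f 2) : ℋ := ⟨f, hf⟩

@[simp] lemma mkH_apply (f : G → ℂ) (hf : Memℓp f 2) (x : G) : mkH f hf x = f x := rfl

lemma memℓp_comp (e : G ≃ G) (f : ℋ) : Memℓp (fun x => f (e x)) 2 := by
  apply memℓp_gen
  exact e.summable_iff.2 ((memℓp_gen_iff (by norm_num)).1 (lp.memℓp f))

lemma norm_comp_eq (e : G ≃ G) (f : ℋ) :
    ‖mkH (fun x => f (e x)) (memℓp_comp e f)‖ = ‖f‖ := by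
  rw [lp.norm_eq_tsum_rpow (by norm_num) f, lp.norm_eq_tsum_rpow (by norm_num)]
  congr 1
  exact e.tsum_eq fun i => ‖f i‖ ^ (2 : ℝ≥0∞).toReal

/-- Left-translation operator on `ℓ²(G)`. -/
noncomputable def trOp (y : G) : ℋ →L[ℂ] ℋ :=
  LinearMap.mkContinuous
    { toFun := fun f => mkH (fun x => f (y⁻¹ * x)) (memℓp_comp (Equiv.mulLeft y⁻¹) f)
      map_add' := fun f g => rfl
      map_smul' := fun c f => rfl }
    1 (fun f => by
      rw [one_mul]
      exact le_of_eq (norm_comp_eq (Equiv.mulLeft y⁻¹) f))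

@[simp] lemma trOp_apply (y : G) (f : ℋ) (x : G) : trOp y f x = f (y⁻¹ * x) := rfl

lemma norm_trOp_le (y : G) : ‖(trOp (G := G) y)‖ ≤ 1 :=
  LinearMap.mkContinuous_norm_le _ zero_le_one _

/-- Evaluation at a point as a continuous linear functional on `ℓ²(G)`. -/
noncomputable def evCLM (x : G) : ℋ →L[ℂ] ℂ :=
  LinearMap.mkContinuous
    { toFun := fun f => f x
      map_add' := by intro f g; simp [lp.coeFn_add]
      map_smul' := by intro c f; simp [lp.coeFn_smul] }
    1 (fun f => by
      rw [one_mul]; exact lp.norm_apply_le_norm (by norm_num) f x)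

@[simp] lemma evCLM_apply (x : G) (f : ℋ) : evCLM x f = f x := rfl

variable (φ : G → ℝ)

/-- The convolution (Markov) operator on `ℓ²(G)`. -/
noncomputable def Aop : ℋ →L[ℂ] ℋ := ∑' y : G, (φ y : ℂ) • trOp y


section ops

variable {φ : G → ℝ}

lemma norm_smul_trOp_le (hpos : ∀ x, 0 ≤ φ x) (y : G) :
    ‖(φ y : ℂ) • trOp (G := G) y‖ ≤ φ y := by
  refine le_trans (norm_smul_le ((φ y : ℂ)) (trOp (G := G) y)) ?_
  calc ‖(φ y : ℂ)‖ * ‖trOp (G := G) y‖ ≤ φ y * 1 := by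
        apply mul_le_mul _ (norm_trOp_le y) (norm_nonneg _) (hpos y)
        rw [Complex.norm_real, Real.norm_eq_abs]
        exact le_of_eq (abs_of_nonneg (hpos y))
    _ = φ y := mul_one _

lemma summable_smul_trOp (hpos : ∀ x, 0 ≤ φ x) (hsum : ∑' x, φ x = 1) :
    Summable fun y : G => (φ y : ℂ) • trOp (G := G) y := by
  exact Summable.of_norm_bounded (prob_summable hsum) fun y => norm_smul_trOp_le hpos y

lemma norm_Aop_le (hpos : ∀ x, 0 ≤ φ x) (hsum : ∑' x, φ x = 1) : ‖Aop φ‖ ≤ 1 := by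
  have hs : Summable fun y : G => ‖(φ y : ℂ) • trOp (G := G) y‖ :=
    Summable.of_nonneg_of_le (fun y => norm_nonneg _) (fun y => norm_smul_trOp_le hpos y)
      (prob_summable hsum)
  refine (norm_tsum_le_tsum_norm hs).trans ?_
  calc ∑' y, ‖(φ y : ℂ) • trOp (G := G) y‖ ≤ ∑' y, φ y :=
        Summable.tsum_le_tsum (fun y => norm_smul_trOp_le hpos y) hs (prob_summable hsum)
    _ = 1 := hsum

lemma Aop_apply_coord (hpos : ∀ x, 0 ≤ φ x) (hsum : ∑' x, φ x = 1) (f : ℋ) (x : G) :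
    Aop φ f x = ∑' y, (φ y : ℂ) * f (y⁻¹ * x) := by
  have hS := summable_smul_trOp hpos hsum
  have h1 : Aop φ f = ∑' y, ((φ y : ℂ) • trOp y) f := by
    unfold Aop
    exact ContinuousLinearMap.map_tsum (ContinuousLinearMap.apply ℂ ℋ f) hS
  have hSf : Summable fun y => ((φ y : ℂ) • trOp (G := G) y) f :=
    hS.map (ContinuousLinearMap.apply ℂ ℋ f).toLinearMap.toAddMonoidHom
      (ContinuousLinearMap.apply ℂ ℋ f).continuous
  have h2 : Aop φ f x = ∑' y, (((φ y : ℂ) • trOp y) f) x := by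
    rw [h1]
    exact ContinuousLinearMap.map_tsum (evCLM x) hSf
  rw [h2]
  exact tsum_congr fun y => rfl

lemma memℓp_ofReal {g : G → ℝ} (hg0 : ∀ x, 0 ≤ g x) (hg1 : ∑' x, g x = 1) :
    Memℓp (fun x => (g x : ℂ)) 2 := by
  apply memℓp_gen
  have hle1 : ∀ x, g x ≤ 1 := fun x =>
    (Summable.le_tsum (prob_summable hg1) x fun j _ => hg0 j).trans_eq hg1
  refine Summable.of_nonneg_of_le (fun x => ?_) (fun x => ?_) (prob_summable hg1)
  · positivity
  · rw [ENNReal.toReal_ofNat, show ((2:ℝ)) = ((2:ℕ):ℝ) by norm_num, Real.rpow_natCast,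
      Complex.norm_real, Real.norm_eq_abs, abs_of_nonneg (hg0 x)]
    calc g x ^ 2 = g x * g x := sq (g x) ▸ rfl
      _ ≤ g x * 1 := mul_le_mul_of_nonneg_left (hle1 x) (hg0 x)
      _ = g x := mul_one _

lemma summable_conv_term (hpos : ∀ x, 0 ≤ φ x) (hsum : ∑' x, φ x = 1)
    {ν : G → ℝ} (hν0 : ∀ x, 0 ≤ ν x) (hν1 : ∑' x, ν x = 1) (x : G) :
    Summable fun y => φ y * ν (y⁻¹ * x) := by
  have hle1 : ∀ z, ν z ≤ 1 := fun z =>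
    (Summable.le_tsum (prob_summable hν1) z fun j _ => hν0 j).trans_eq hν1
  refine Summable.of_nonneg_of_le (fun y => mul_nonneg (hpos y) (hν0 _)) (fun y => ?_)
    (prob_summable hsum)
  calc φ y * ν (y⁻¹ * x) ≤ φ y * 1 := mul_le_mul_of_nonneg_left (hle1 _) (hpos y)
    _ = φ y := mul_one _

lemma Aop_ofReal (hpos : ∀ x, 0 ≤ φ x) (hsum : ∑' x, φ x = 1)
    {ν : G → ℝ} (hν0 : ∀ x, 0 ≤ ν x) (hν1 : ∑' x, ν x = 1) :
    Aop φ (mkH _ (memℓp_ofReal hν0 hν1)) =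
      mkH (fun x => (convolve φ ν x : ℂ))
        (memℓp_ofReal (conv_prob hpos hsum hν0 hν1).1 (conv_prob hpos hsum hν0 hν1).2) := by
  apply Subtype.ext
  funext x
  have h1 : Aop φ (mkH _ (memℓp_ofReal hν0 hν1)) x = ∑' y, (φ y : ℂ) * (ν (y⁻¹ * x) : ℂ) :=
    Aop_apply_coord hpos hsum _ x
  have h2 : ((convolve φ ν x : ℝ) : ℂ) = ∑' y, ((φ y * ν (y⁻¹ * x) : ℝ) : ℂ) :=
    Complex.ofReal_tsum _
  show Aop φ (mkH _ (memℓp_ofReal hν0 hν1)) x = ((convolve φ ν x : ℝ) : ℂ)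
  rw [h1, h2]
  congr 1
  funext y
  rw [Complex.ofReal_mul]

/-- The Dirac mass at the identity, as an element of `ℓ²(G)`. -/
noncomputable def dirac [DecidableEq G] : ℋ := lp.single 2 (1 : G) 1

lemma Apow_dirac [DecidableEq G] (hpos : ∀ x, 0 ≤ φ x) (hsum : ∑' x, φ x = 1) (k : ℕ) :
    ((Aop φ) ^ k) dirac =
      mkH (fun x => (convPow φ k x : ℂ))
        (memℓp_ofReal (convPow_prob hpos hsum k).1 (convPow_prob hpos hsum k).2) := by
  induction k with
  | zero =>
      rw [pow_zero, ContinuousLinearMap.one_apply]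
      apply Subtype.ext
      funext x
      show (lp.single 2 (1 : G) (1:ℂ) : ∀ _, ℂ) x = ((convPow φ 0 x : ℝ) : ℂ)
      rcases eq_or_ne x 1 with hx | hx
      · subst hx; rw [lp.single_apply_self]; simp [convPow]
      · rw [lp.single_apply_ne _ _ _ hx]; simp [convPow, hx]
  | succ m ih =>
      rw [pow_succ', ContinuousLinearMap.mul_apply, ih]
      rw [Aop_ofReal hpos hsum (convPow_prob hpos hsum m).1 (convPow_prob hpos hsum m).2]
      rfl

end ops


section selfadj

variable {φ : G → ℝ}

local notation "⟪" x ", " y "⟫" => @inner ℂ _ _ x y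

lemma adjoint_trOp (y : G) :
    ContinuousLinearMap.adjoint (trOp (G := G) y) = trOp y⁻¹ := by
  symm
  rw [ContinuousLinearMap.eq_adjoint_iff]
  intro f g
  rw [lp.inner_eq_tsum, lp.inner_eq_tsum]
  refine Eq.trans (tsum_congr fun x => ?_)
    ((Equiv.mulLeft y).tsum_eq fun x => (⟪f x, (trOp (G := G) y g) x⟫ : ℂ))
  show (⟪(trOp (G := G) y⁻¹ f) x, g x⟫ : ℂ) = ⟪f (y * x), (trOp (G := G) y g) (y * x)⟫
  rw [trOp_apply, trOp_apply, inv_inv, inv_mul_cancel_left]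

lemma star_trOp (y : G) : star (trOp (G := G) y) = trOp y⁻¹ := by
  rw [ContinuousLinearMap.star_eq_adjoint, adjoint_trOp]

lemma isSelfAdjoint_Aop (hpos : ∀ x, 0 ≤ φ x) (hsum : ∑' x, φ x = 1)
    (hsymm : ∀ x, φ x⁻¹ = φ x) : IsSelfAdjoint (Aop φ) := by
  show star (Aop φ) = Aop φ
  unfold Aop
  rw [tsum_star]
  have h1 : ∀ y : G, star ((φ y : ℂ) • trOp (G := G) y) = (φ y : ℂ) • trOp y⁻¹ := by
    intro y
    rw [star_smul, star_trOp, Complex.star_def, Complex.conj_ofReal]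
  calc ∑' y, star ((φ y : ℂ) • trOp (G := G) y)
      = ∑' y, (φ y : ℂ) • trOp (G := G) y⁻¹ := tsum_congr h1
    _ = ∑' y, (fun z => (φ z⁻¹ : ℂ) • trOp (G := G) z) y⁻¹ :=
        tsum_congr fun y => by simp only [inv_inv]
    _ = ∑' z, (φ z⁻¹ : ℂ) • trOp (G := G) z := by
        have h2 := (Equiv.inv G).tsum_eq (fun z => (φ z⁻¹ : ℂ) • trOp (G := G) z)
        simpa using h2
    _ = ∑' z, (φ z : ℂ) • trOp (G := G) z := tsum_congr fun z => by rw [hsymm]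

lemma spec_subset [DecidableEq G] (hpos : ∀ x, 0 ≤ φ x) (hsum : ∑' x, φ x = 1) :
    spectrum ℝ (Aop φ) ⊆ Set.Icc (-1 : ℝ) 1 := by
  haveI : Nontrivial ℋ := by
    refine ⟨⟨lp.single 2 (1 : G) 1, 0, fun h => ?_⟩⟩
    have h1 : ((lp.single 2 (1 : G) (1:ℂ) : ℋ)) (1 : G) = ((0 : ℋ)) (1 : G) := by rw [h]
    rw [lp.single_apply_self] at h1
    simp only [lp.coeFn_zero, Pi.zero_apply] at h1
    exact one_ne_zero h1
  haveI : NormOneClass (ℋ →L[ℂ] ℋ) := ⟨ContinuousLinearMap.norm_id⟩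
  intro x hx
  have h1 : ‖x‖ ≤ ‖Aop φ‖ := spectrum.norm_le_norm_of_mem hx
  have h2 := h1.trans (norm_Aop_le hpos hsum)
  rw [Real.norm_eq_abs] at h2
  exact Set.mem_Icc.mpr (abs_le.mp h2)

/-- The diagonal matrix coefficient at the identity. -/
noncomputable def Lfn [DecidableEq G] (T : ℋ →L[ℂ] ℋ) : ℝ := ((T dirac) 1).re

lemma inner_dirac_eq [DecidableEq G] (f : ℋ) : (⟪dirac, f⟫ : ℂ) = f 1 := by
  rw [dirac, lp.inner_single_left]
  simp [RCLike.inner_apply]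

lemma Lfn_mono [DecidableEq G] {T S : ℋ →L[ℂ] ℋ} (h : T ≤ S) : Lfn T ≤ Lfn S := by
  have hp : (S - T).IsPositive := (ContinuousLinearMap.le_def T S).mp h
  have h0 := hp.inner_nonneg_right (dirac (G := G))
  rw [inner_dirac_eq] at h0
  have h1 : ((S - T) dirac) 1 = (S dirac) 1 - (T dirac) 1 := by
    rw [ContinuousLinearMap.sub_apply]
    simp [lp.coeFn_sub, Pi.sub_apply]
  rw [h1] at h0
  simp only [RCLike.re_to_complex, Complex.sub_re] at h0
  unfold Lfn
  have h0' := (Complex.le_def.mp h0).1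
  simp only [Complex.zero_re, Complex.sub_re] at h0'
  linarith

lemma Lfn_pow [DecidableEq G] (hpos : ∀ x, 0 ≤ φ x) (hsum : ∑' x, φ x = 1) (k : ℕ) :
    Lfn ((Aop φ) ^ k) = convPow φ k 1 := by
  unfold Lfn
  rw [Apow_dirac hpos hsum k]
  simp [mkH]

lemma Lfn_add [DecidableEq G] (T S : ℋ →L[ℂ] ℋ) : Lfn (T + S) = Lfn T + Lfn S := by
  unfold Lfn
  rw [ContinuousLinearMap.add_apply]
  simp [lp.coeFn_add, Pi.add_apply, Complex.add_re]

lemma Lfn_zero [DecidableEq G] : Lfn (0 : ℋ →L[ℂ] ℋ) = 0 := by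
  unfold Lfn
  simp [lp.coeFn_zero]

lemma Lfn_smul [DecidableEq G] (c : ℝ) (T : ℋ →L[ℂ] ℋ) : Lfn (c • T) = c * Lfn T := by
  unfold Lfn
  rw [ContinuousLinearMap.smul_apply]
  rw [lp.coeFn_smul, Pi.smul_apply]
  rw [Complex.real_smul, Complex.re_ofReal_mul]

lemma Lfn_one [DecidableEq G] : Lfn (1 : ℋ →L[ℂ] ℋ) = 1 := by
  unfold Lfn
  rw [ContinuousLinearMap.one_apply, dirac, lp.single_apply_self]
  simp

lemma Lfn_sum [DecidableEq G] {ι : Type*} (s : Finset ι) (F : ι → ℋ →L[ℂ] ℋ) :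
    Lfn (∑ i ∈ s, F i) = ∑ i ∈ s, Lfn (F i) := by
  classical
  induction s using Finset.induction_on with
  | empty => simpa using Lfn_zero
  | insert _ _ hnot ih =>
      rw [Finset.sum_insert hnot, Finset.sum_insert hnot, Lfn_add, ih]

end selfadj


section cfcpart

variable {φ : G → ℝ} [DecidableEq G]

lemma L_cfc_mono (hpos : ∀ x, 0 ≤ φ x) (hsum : ∑' x, φ x = 1)
    {f g : ℝ → ℝ} (hf : Continuous f) (hg : Continuous g)
    (hfg : ∀ x ∈ Set.Icc (-1 : ℝ) 1, f x ≤ g x) :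
    Lfn (cfc f (Aop φ)) ≤ Lfn (cfc g (Aop φ)) :=
  Lfn_mono (cfc_mono (fun x hx => hfg x (spec_subset hpos hsum hx))
    hf.continuousOn hg.continuousOn)

lemma L_cfc_poly (hpos : ∀ x, 0 ≤ φ x) (hsum : ∑' x, φ x = 1)
    (hsymm : ∀ x, φ x⁻¹ = φ x) (t : ℝ) (N : ℕ) :
    Lfn (cfc (fun x : ℝ => ∑ k ∈ Finset.range N, t ^ k / (Nat.factorial k : ℝ) * x ^ k) (Aop φ)) =
      ∑ k ∈ Finset.range N, t ^ k / (Nat.factorial k : ℝ) * convPow φ k 1 := by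
  have ha := isSelfAdjoint_Aop hpos hsum hsymm
  have hfun : (fun x : ℝ => ∑ k ∈ Finset.range N, t ^ k / (Nat.factorial k : ℝ) * x ^ k) =
      ∑ k ∈ Finset.range N, (fun x : ℝ => t ^ k / (Nat.factorial k : ℝ) * x ^ k) := by
    funext x
    simp [Finset.sum_apply]
  rw [hfun, cfc_sum _ (Aop φ) _ (fun i _ => by fun_prop), Lfn_sum]
  refine Finset.sum_congr rfl fun k _ => ?_
  rw [cfc_const_mul (t ^ k / (Nat.factorial k : ℝ)) (fun x : ℝ => x ^ k) (Aop φ) (by fun_prop)]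
  rw [show (fun x : ℝ => x ^ k) = (· ^ k : ℝ → ℝ) from rfl, cfc_pow_id (Aop φ) k ha]
  rw [Lfn_smul, Lfn_pow hpos hsum]

lemma L_cfc_const (hpos : ∀ x, 0 ≤ φ x) (hsum : ∑' x, φ x = 1)
    (hsymm : ∀ x, φ x⁻¹ = φ x) (c : ℝ) :
    Lfn (cfc (fun _ : ℝ => c) (Aop φ)) = c := by
  have ha := isSelfAdjoint_Aop hpos hsum hsymm
  rw [cfc_const c (Aop φ) ha, Algebra.algebraMap_eq_smul_one, Lfn_smul, Lfn_one, mul_one]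

lemma summable_coeff (hpos : ∀ x, 0 ≤ φ x) (hsum : ∑' x, φ x = 1) (t : ℝ) :
    Summable fun k : ℕ => t ^ k / (Nat.factorial k : ℝ) * convPow φ k 1 := by
  refine Summable.of_norm_bounded (Real.summable_pow_div_factorial |t|) fun k => ?_
  have h0 := (convPow_prob hpos hsum k).1 1
  have h1 := convPow_le_one hpos hsum k 1
  rw [Real.norm_eq_abs, abs_mul, abs_div, abs_pow, abs_of_nonneg h0,
    Nat.abs_cast]
  calc |t| ^ k / (Nat.factorial k : ℝ) * convPow φ k 1
      ≤ |t| ^ k / (Nat.factorial k : ℝ) * 1 := by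
        apply mul_le_mul_of_nonneg_left h1
        positivity
    _ = |t| ^ k / (Nat.factorial k : ℝ) := mul_one _

lemma L_cfc_exp (hpos : ∀ x, 0 ≤ φ x) (hsum : ∑' x, φ x = 1)
    (hsymm : ∀ x, φ x⁻¹ = φ x) (t : ℝ) :
    Lfn (cfc (fun x : ℝ => Real.exp (t * x)) (Aop φ)) =
      ∑' k, t ^ k / (Nat.factorial k : ℝ) * convPow φ k 1 := by
  have ha := isSelfAdjoint_Aop hpos hsum hsymm
  have habs : Summable (fun k : ℕ => |t| ^ k / (Nat.factorial k : ℝ)) :=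
    Real.summable_pow_div_factorial |t|
  have hcoef := summable_coeff hpos hsum t
  set L := Lfn (cfc (fun x : ℝ => Real.exp (t * x)) (Aop φ)) with hL
  have key : ∀ N : ℕ,
      |L - ∑ k ∈ Finset.range N, t ^ k / (Nat.factorial k : ℝ) * convPow φ k 1|
        ≤ ∑' k, |t| ^ (k + N) / (Nat.factorial (k + N) : ℝ) := by
    intro N
    set P : ℝ → ℝ := fun x => ∑ k ∈ Finset.range N, t ^ k / (Nat.factorial k : ℝ) * x ^ k with hP
    set ε : ℝ := ∑' k, |t| ^ (k + N) / (Nat.factorial (k + N) : ℝ) with hε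
    have hsum1 : Summable fun k => |t| ^ (k + N) / (Nat.factorial (k + N) : ℝ) :=
      (summable_nat_add_iff N).mpr habs
    have hptw : ∀ x ∈ Set.Icc (-1 : ℝ) 1, |Real.exp (t * x) - P x| ≤ ε := by
      intro x hx
      have hxabs : |x| ≤ 1 := abs_le.mpr ⟨hx.1, hx.2⟩
      have hsum_tx : Summable fun k : ℕ => (t * x) ^ k / (Nat.factorial k : ℝ) :=
        Real.summable_pow_div_factorial (t * x)
      have hsum_tx' : Summable fun k => (t * x) ^ (k + N) / (Nat.factorial (k + N) : ℝ) :=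
        (summable_nat_add_iff N).mpr hsum_tx
      have hexp : Real.exp (t * x) = ∑' k, (t * x) ^ k / (Nat.factorial k : ℝ) := by
        rw [Real.exp_eq_exp_ℝ]
        exact congrFun NormedSpace.exp_eq_tsum_div (t * x)
      have hPx : P x = ∑ k ∈ Finset.range N, (t * x) ^ k / (Nat.factorial k : ℝ) := by
        rw [hP]
        refine Finset.sum_congr rfl fun k _ => ?_
        rw [mul_pow]
        ring
      have htail := Summable.sum_add_tsum_nat_add (f := fun k => (t * x) ^ k / (Nat.factorial k : ℝ))
        N hsum_tx
      have hdiff : Real.exp (t * x) - P x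
          = ∑' k, (t * x) ^ (k + N) / (Nat.factorial (k + N) : ℝ) := by
        rw [hexp, hPx]
        linarith [htail]
      rw [hdiff]
      have hterm : ∀ k : ℕ, |(t * x) ^ (k + N) / (Nat.factorial (k + N) : ℝ)|
          ≤ |t| ^ (k + N) / (Nat.factorial (k + N) : ℝ) := by
        intro k
        rw [abs_div, abs_pow, Nat.abs_cast, abs_mul]
        have hb : |t| * |x| ≤ |t| := by
          calc |t| * |x| ≤ |t| * 1 := mul_le_mul_of_nonneg_left hxabs (abs_nonneg t)
            _ = |t| := mul_one _
        have hp : (|t| * |x|) ^ (k + N) ≤ |t| ^ (k + N) :=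
          pow_le_pow_left₀ (by positivity) hb _
        exact (div_le_div_iff_of_pos_right (by positivity)).mpr hp
      calc |∑' k, (t * x) ^ (k + N) / (Nat.factorial (k + N) : ℝ)|
          ≤ ∑' k, |(t * x) ^ (k + N) / (Nat.factorial (k + N) : ℝ)| := by
            have hs2 : Summable fun k => ‖(t * x) ^ (k + N) / (Nat.factorial (k + N) : ℝ)‖ := by
              simp only [Real.norm_eq_abs]
              exact hsum_tx'.abs
            have hn := norm_tsum_le_tsum_norm
              (f := fun k => (t * x) ^ (k + N) / (Nat.factorial (k + N) : ℝ)) hs2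
            simp only [Real.norm_eq_abs] at hn
            exact hn
        _ ≤ ε := Summable.tsum_le_tsum hterm hsum_tx'.abs hsum1
    have hε0 : 0 ≤ ε := tsum_nonneg fun k => by positivity
    have hPcont : Continuous P := by
      rw [hP]
      fun_prop
    have hup : L ≤ (∑ k ∈ Finset.range N, t ^ k / (Nat.factorial k : ℝ) * convPow φ k 1) + ε := by
      have h1 : L ≤ Lfn (cfc (fun x : ℝ => P x + ε) (Aop φ)) := by
        apply L_cfc_mono hpos hsum (by fun_prop) (by fun_prop)
        intro x hx
        have := (abs_le.mp (hptw x hx)).2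
        linarith
      have h2 : cfc (fun x : ℝ => P x + ε) (Aop φ) = cfc P (Aop φ) + algebraMap ℝ _ ε :=
        cfc_add_const ε P (Aop φ) hPcont.continuousOn ha
      rw [h2, Lfn_add, Algebra.algebraMap_eq_smul_one, Lfn_smul, Lfn_one, mul_one] at h1
      rw [hP] at h1
      rw [L_cfc_poly hpos hsum hsymm t N] at h1
      exact h1
    have hlow : (∑ k ∈ Finset.range N, t ^ k / (Nat.factorial k : ℝ) * convPow φ k 1) - ε ≤ L := by
      have h1 : Lfn (cfc (fun x : ℝ => P x + (-ε)) (Aop φ)) ≤ L := by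
        apply L_cfc_mono hpos hsum (by fun_prop) (by fun_prop)
        intro x hx
        have := (abs_le.mp (hptw x hx)).1
        linarith
      have h2 : cfc (fun x : ℝ => P x + (-ε)) (Aop φ) = cfc P (Aop φ) + algebraMap ℝ _ (-ε) :=
        cfc_add_const (-ε) P (Aop φ) hPcont.continuousOn ha
      rw [h2, Lfn_add, Algebra.algebraMap_eq_smul_one, Lfn_smul, Lfn_one, mul_one] at h1
      rw [hP] at h1
      rw [L_cfc_poly hpos hsum hsymm t N] at h1
      linarith
    rw [abs_sub_le_iff]
    constructor <;> linarith
  have hεlim : Filter.Tendsto (fun N => ∑' k, |t| ^ (k + N) / (Nat.factorial (k + N) : ℝ))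
      Filter.atTop (nhds 0) :=
    tendsto_sum_nat_add (fun m => |t| ^ m / (Nat.factorial m : ℝ))
  have hpart : Filter.Tendsto
      (fun N => ∑ k ∈ Finset.range N, t ^ k / (Nat.factorial k : ℝ) * convPow φ k 1)
      Filter.atTop (nhds (∑' k, t ^ k / (Nat.factorial k : ℝ) * convPow φ k 1)) :=
    hcoef.hasSum.tendsto_sum_nat
  have hto : Filter.Tendsto
      (fun N => ∑ k ∈ Finset.range N, t ^ k / (Nat.factorial k : ℝ) * convPow φ k 1)
      Filter.atTop (nhds L) := by
    rw [tendsto_iff_dist_tendsto_zero]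
    refine squeeze_zero (fun N => dist_nonneg) (fun N => ?_) hεlim
    rw [Real.dist_eq, abs_sub_comm]
    exact key N
  exact tendsto_nhds_unique hto hpart

end cfcpart


/-! ### Scalar inequalities -/

lemma scalar1 (n : ℕ) : ∀ x ∈ Set.Icc (-1 : ℝ) 1,
    x ^ (2 * n + 2) ≤ Real.exp (-(2 * (n : ℝ))) *
      (Real.exp ((2 * (n : ℝ)) * x) + Real.exp ((-(2 * (n : ℝ))) * x)) := by
  intro x hx
  have hxabs : |x| ≤ 1 := abs_le.mpr ⟨hx.1, hx.2⟩
  have h1 : x ^ (2 * n + 2) ≤ |x| ^ (2 * n) := by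
    calc x ^ (2 * n + 2) ≤ |x ^ (2 * n + 2)| := le_abs_self _
      _ = |x| ^ (2 * n + 2) := abs_pow x _
      _ ≤ |x| ^ (2 * n) := pow_le_pow_of_le_one (abs_nonneg x) hxabs (by omega)
  have h2 : |x| ^ (2 * n) ≤ Real.exp ((2 * (n : ℝ)) * |x| - 2 * (n : ℝ)) := by
    have hb : |x| ≤ Real.exp (|x| - 1) := by
      have h := Real.add_one_le_exp (|x| - 1)
      linarith
    calc |x| ^ (2 * n) ≤ Real.exp (|x| - 1) ^ (2 * n) :=
          pow_le_pow_left₀ (abs_nonneg x) hb _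
      _ = Real.exp (((2 * n : ℕ) : ℝ) * (|x| - 1)) := (Real.exp_nat_mul _ _).symm
      _ = Real.exp ((2 * (n : ℝ)) * |x| - 2 * (n : ℝ)) := by
          congr 1
          push_cast
          ring
  have h3 : Real.exp ((2 * (n : ℝ)) * |x|)
      ≤ Real.exp ((2 * (n : ℝ)) * x) + Real.exp ((-(2 * (n : ℝ))) * x) := by
    rcases le_total 0 x with hx0 | hx0
    · rw [abs_of_nonneg hx0]
      have := (Real.exp_pos ((-(2 * (n : ℝ))) * x)).le
      linarith
    · rw [abs_of_nonpos hx0]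
      have h4 := (Real.exp_pos ((2 * (n : ℝ)) * x)).le
      have heq : (2 * (n : ℝ)) * -x = (-(2 * (n : ℝ))) * x := by ring
      rw [heq]
      linarith
  calc x ^ (2 * n + 2) ≤ Real.exp ((2 * (n : ℝ)) * |x| - 2 * (n : ℝ)) := h1.trans h2
    _ = Real.exp (-(2 * (n : ℝ))) * Real.exp ((2 * (n : ℝ)) * |x|) := by
        rw [← Real.exp_add]
        congr 1
        ring
    _ ≤ Real.exp (-(2 * (n : ℝ))) *
        (Real.exp ((2 * (n : ℝ)) * x) + Real.exp ((-(2 * (n : ℝ))) * x)) :=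
        mul_le_mul_of_nonneg_left h3 (Real.exp_pos _).le

lemma scalar2 (n : ℕ) (hn : 1 ≤ n) : ∀ x ∈ Set.Icc (-1 : ℝ) 1,
    Real.exp (-(4 * (n : ℝ))) * Real.exp ((4 * (n : ℝ)) * x)
      ≤ Real.exp (-(2 * (n : ℝ))) + x ^ (2 * n) := by
  intro x hx
  have hn0 : (0 : ℝ) ≤ (n : ℝ) := Nat.cast_nonneg n
  have hmain : Real.exp (-(4 * (n : ℝ))) * Real.exp ((4 * (n : ℝ)) * x)
      = Real.exp ((4 * (n : ℝ)) * (x - 1)) := by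
    rw [← Real.exp_add]
    congr 1
    ring
  rcases le_or_gt x (1 / 2) with hhalf | hhalf
  · have harg : (4 * (n : ℝ)) * (x - 1) ≤ -(2 * (n : ℝ)) := by nlinarith
    have h1 : Real.exp ((4 * (n : ℝ)) * (x - 1)) ≤ Real.exp (-(2 * (n : ℝ))) :=
      Real.exp_le_exp.mpr harg
    have h2 : (0 : ℝ) ≤ x ^ (2 * n) := (even_two_mul n).pow_nonneg x
    rw [hmain]
    linarith
  · have hx0 : (0 : ℝ) < x := lt_trans (by norm_num) hhalf
    have hx1 : x ≤ 1 := hx.2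
    have hE := Real.add_one_le_exp (1 - x)
    have hEpos := Real.exp_pos (1 - x)
    have hE' : 2 - x ≤ Real.exp (1 - x) := by linarith
    have hsq : (2 - x) * (2 - x) ≤ Real.exp (1 - x) ^ 2 := by
      rw [sq]
      exact mul_le_mul hE' hE' (by linarith) hEpos.le
    have hxx : x * x ≤ x := by nlinarith
    have h5 : (0:ℝ) ≤ 3 * x - 1 - x * x := by nlinarith
    have hpoly : 1 ≤ x * ((2 - x) * (2 - x)) := by
      nlinarith [mul_nonneg (by linarith : (0:ℝ) ≤ 1 - x) h5]
    have hkey : 1 ≤ x * Real.exp (1 - x) ^ 2 :=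
      hpoly.trans (mul_le_mul_of_nonneg_left hsq hx0.le)
    have hbase : Real.exp (2 * (x - 1)) ≤ x := by
      have hmul : Real.exp (2 * (x - 1)) * Real.exp (1 - x) ^ 2 = 1 := by
        rw [sq, ← Real.exp_add, ← Real.exp_add,
          show 2 * (x - 1) + (1 - x + (1 - x)) = 0 by ring, Real.exp_zero]
      nlinarith [Real.exp_pos (2 * (x - 1)), sq_nonneg (Real.exp (1 - x))]
    have hpow : Real.exp ((4 * (n : ℝ)) * (x - 1)) ≤ x ^ (2 * n) := by
      have h1 : Real.exp (2 * (x - 1)) ^ (2 * n) ≤ x ^ (2 * n) :=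
        pow_le_pow_left₀ (Real.exp_pos _).le hbase _
      have h2 : Real.exp ((4 * (n : ℝ)) * (x - 1)) = Real.exp (2 * (x - 1)) ^ (2 * n) := by
        rw [← Real.exp_nat_mul]
        congr 1
        push_cast
        ring
      rw [h2]
      exact h1
    rw [hmain]
    have h3 := (Real.exp_pos (-(2 * (n : ℝ)))).le
    linarith

end DVC

/-- For any symmetric probability measure `φ` on a countable group,
`φ^{(2n+2)}(e) ≤ 2·h_{2n}^φ(e)` and `h_{4n}^φ(e) ≤ e^{−2n} + φ^{(2n)}(e)` for `n ≥ 1`. -/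
theorem discrete_vs_continuous_time {G : Type*} [Group G] [Countable G]
    (φ : G → ℝ) (hφ : IsSymProb φ) (n : ℕ) (hn : 1 ≤ n) :
    convPow φ (2 * n + 2) 1 ≤ 2 * contHeat φ (2 * n) ∧
      contHeat φ (4 * n) ≤ Real.exp (-(2 * (n : ℝ))) + convPow φ (2 * n) 1 := by
  classical
  obtain ⟨hpos, hsum, hsymm⟩ := hφ
  have ha := DVC.isSelfAdjoint_Aop (φ := φ) hpos hsum hsymm
  constructor
  · -- discrete vs continuous time, part 1
    have hpow : convPow φ (2 * n + 2) 1
        = DVC.Lfn (cfc (· ^ (2 * n + 2) : ℝ → ℝ) (DVC.Aop φ)) := by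
      rw [cfc_pow_id (DVC.Aop φ) (2 * n + 2) ha, DVC.Lfn_pow hpos hsum]
    have hmono : DVC.Lfn (cfc (· ^ (2 * n + 2) : ℝ → ℝ) (DVC.Aop φ)) ≤
        DVC.Lfn (cfc (fun x : ℝ => Real.exp (-(2 * (n : ℝ))) *
          (Real.exp ((2 * (n : ℝ)) * x) + Real.exp ((-(2 * (n : ℝ))) * x))) (DVC.Aop φ)) :=
      DVC.L_cfc_mono hpos hsum (by fun_prop) (by fun_prop) (DVC.scalar1 n)
    have hsplit : cfc (fun x : ℝ => Real.exp (-(2 * (n : ℝ))) *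
          (Real.exp ((2 * (n : ℝ)) * x) + Real.exp ((-(2 * (n : ℝ))) * x))) (DVC.Aop φ)
        = Real.exp (-(2 * (n : ℝ))) •
            (cfc (fun x : ℝ => Real.exp ((2 * (n : ℝ)) * x)) (DVC.Aop φ) +
             cfc (fun x : ℝ => Real.exp ((-(2 * (n : ℝ))) * x)) (DVC.Aop φ)) := by
      rw [cfc_const_mul _ _ _ (by fun_prop)]
      congr 1
      exact cfc_add (a := DVC.Aop φ) _ _ (by fun_prop) (by fun_prop)
    have hfinal : DVC.Lfn (cfc (fun x : ℝ => Real.exp (-(2 * (n : ℝ))) *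
          (Real.exp ((2 * (n : ℝ)) * x) + Real.exp ((-(2 * (n : ℝ))) * x))) (DVC.Aop φ))
        = Real.exp (-(2 * (n : ℝ))) *
            ((∑' k, (2 * (n : ℝ)) ^ k / (Nat.factorial k : ℝ) * convPow φ k 1) +
             (∑' k, (-(2 * (n : ℝ))) ^ k / (Nat.factorial k : ℝ) * convPow φ k 1)) := by
      rw [hsplit, DVC.Lfn_smul, DVC.Lfn_add, DVC.L_cfc_exp hpos hsum hsymm (2 * (n : ℝ)),
        DVC.L_cfc_exp hpos hsum hsymm (-(2 * (n : ℝ)))]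
    have hcmp : (∑' k, (-(2 * (n : ℝ))) ^ k / (Nat.factorial k : ℝ) * convPow φ k 1)
        ≤ ∑' k, (2 * (n : ℝ)) ^ k / (Nat.factorial k : ℝ) * convPow φ k 1 := by
      refine Summable.tsum_le_tsum (fun k => ?_) (DVC.summable_coeff hpos hsum _)
        (DVC.summable_coeff hpos hsum _)
      have hc0 : (0 : ℝ) ≤ 2 * (n : ℝ) := by positivity
      have h1 : (-(2 * (n : ℝ))) ^ k ≤ (2 * (n : ℝ)) ^ k := by
        calc (-(2 * (n : ℝ))) ^ k ≤ |(-(2 * (n : ℝ))) ^ k| := le_abs_self _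
          _ = |(-(2 * (n : ℝ)))| ^ k := abs_pow _ _
          _ = (2 * (n : ℝ)) ^ k := by rw [abs_neg, abs_of_nonneg hc0]
      have h2 := (DVC.convPow_prob hpos hsum k).1 1
      have h3 : (0:ℝ) < (Nat.factorial k : ℝ) := by positivity
      exact mul_le_mul_of_nonneg_right ((div_le_div_iff_of_pos_right h3).mpr h1) h2
    have hch : contHeat φ (2 * (n : ℝ)) = Real.exp (-(2 * (n : ℝ))) *
        ∑' k, (2 * (n : ℝ)) ^ k / (Nat.factorial k : ℝ) * convPow φ k 1 := rfl
    rw [hch, hpow]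
    refine hmono.trans ?_
    rw [hfinal]
    have hexpos := (Real.exp_pos (-(2 * (n : ℝ)))).le
    nlinarith [hcmp, hexpos]
  · -- part 2
    have hch : contHeat φ (4 * (n : ℝ)) = Real.exp (-(4 * (n : ℝ))) *
        ∑' k, (4 * (n : ℝ)) ^ k / (Nat.factorial k : ℝ) * convPow φ k 1 := rfl
    have hexp : DVC.Lfn (cfc (fun x : ℝ =>
          Real.exp (-(4 * (n : ℝ))) * Real.exp ((4 * (n : ℝ)) * x)) (DVC.Aop φ))
        = Real.exp (-(4 * (n : ℝ))) *
            ∑' k, (4 * (n : ℝ)) ^ k / (Nat.factorial k : ℝ) * convPow φ k 1 := by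
      rw [cfc_const_mul _ _ _ (by fun_prop), DVC.Lfn_smul,
        DVC.L_cfc_exp hpos hsum hsymm (4 * (n : ℝ))]
    have hmono : DVC.Lfn (cfc (fun x : ℝ =>
          Real.exp (-(4 * (n : ℝ))) * Real.exp ((4 * (n : ℝ)) * x)) (DVC.Aop φ))
        ≤ DVC.Lfn (cfc (fun x : ℝ =>
            Real.exp (-(2 * (n : ℝ))) + x ^ (2 * n)) (DVC.Aop φ)) :=
      DVC.L_cfc_mono hpos hsum (by fun_prop) (by fun_prop) (DVC.scalar2 n hn)
    have hrhs : DVC.Lfn (cfc (fun x : ℝ =>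
          Real.exp (-(2 * (n : ℝ))) + x ^ (2 * n)) (DVC.Aop φ))
        = Real.exp (-(2 * (n : ℝ))) + convPow φ (2 * n) 1 := by
      rw [cfc_const_add (Real.exp (-(2 * (n : ℝ)))) (fun x : ℝ => x ^ (2 * n))
        (DVC.Aop φ) (by fun_prop) ha]
      rw [DVC.Lfn_add, Algebra.algebraMap_eq_smul_one, DVC.Lfn_smul, DVC.Lfn_one, mul_one]
      rw [show (fun x : ℝ => x ^ (2 * n)) = (· ^ (2 * n) : ℝ → ℝ) from rfl,
        cfc_pow_id (DVC.Aop φ) (2 * n) ha, DVC.Lfn_pow hpos hsum]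
    rw [hch, ← hexp]
    rw [← hrhs]
    exact hmono
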